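/- There exists a constant C > 0 such that for all integers m, n ≥ 2 and every configuration A of the m × n Torus Puzzle in which every column is near-full, there is a finite sequence of at most C · m · n unit rotations whose application to A produces a configuration in which every column is body-full. -/

import Mathlib

/- Unit rightward rotation of row i of the m x n Torus Puzzle. -/
def rowRot (m n : ℕ) (i : Fin m) : Equiv.Perm (Fin m × Fin n) where
  toFun p := if p.1 = i then (i, finRotate n p.2) else p
  invFun p := if p.1 = i then (i, (finRotate n).symm p.2) else p
  left_inv := by rintro ⟨a, b⟩; by_cases h : a = i <;> simp [h, -finRotate_apply, -finRotate_symm_apply]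
  right_inv := by rintro ⟨a, b⟩; by_cases h : a = i <;> simp [h, -finRotate_apply, -finRotate_symm_apply]

/- Unit downward rotation of column j of the m x n Torus Puzzle. -/
def colRot (m n : ℕ) (j : Fin n) : Equiv.Perm (Fin m × Fin n) where
  toFun p := if p.2 = j then (finRotate m p.1, j) else p
  invFun p := if p.2 = j then ((finRotate m).symm p.1, j) else p
  left_inv := by rintro ⟨a, b⟩; by_cases h : b = j <;> simp [h, -finRotate_apply, -finRotate_symm_apply]
  right_inv := by rintro ⟨a, b⟩; by_cases h : b = j <;> simp [h, -finRotate_apply, -finRotate_symm_apply]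

/- The set S(m,n) of the m + n unit rotations. -/
def unitRotations (m n : ℕ) : Set (Equiv.Perm (Fin m × Fin n)) :=
  Set.range (rowRot m n) ∪ Set.range (colRot m n)

/- Applying a unit rotation g to a configuration A yields A ∘ g⁻¹. -/
def applyRot {m n : ℕ} (A : (Fin m × Fin n) ≃ Fin (m * n))
    (g : Equiv.Perm (Fin m × Fin n)) : (Fin m × Fin n) ≃ Fin (m * n) :=
  g.symm.trans A

/- Applying a finite sequence of rotations, one after another (left to right). -/
def applySeq {m n : ℕ} (A : (Fin m × Fin n) ≃ Fin (m * n))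
    (L : List (Equiv.Perm (Fin m × Fin n))) : (Fin m × Fin n) ≃ Fin (m * n) :=
  L.foldl applyRot A

/- Column j is near-full: every element in the body of column j has target column j. -/
def NearFull {m n : ℕ} (A : (Fin m × Fin n) ≃ Fin (m * n)) (j : Fin n) : Prop :=
  ∀ i : Fin m, 1 ≤ (i : ℕ) → (A (i, j) : ℕ) % n = (j : ℕ)

/- The body of column j contains exactly the elements with target column j and target row ≥ 1. -/
def BodyOfColumnIsFull {m n : ℕ} (A : (Fin m × Fin n) ≃ Fin (m * n)) (j : Fin n) : Prop :=
  ∀ v : Fin (m * n),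
    (∃ i : Fin m, 1 ≤ (i : ℕ) ∧ A (i, j) = v) ↔ ((v : ℕ) % n = (j : ℕ) ∧ 1 ≤ (v : ℕ) / n)

/- Column j is body-sorted: every element of the body of column j is in its target position. -/
def BodySorted {m n : ℕ} (A : (Fin m × Fin n) ≃ Fin (m * n)) (j : Fin n) : Prop :=
  ∀ i : Fin m, 1 ≤ (i : ℕ) → (A (i, j) : ℕ) = (i : ℕ) * n + (j : ℕ)

/- Column j is body-full: near-full, and moreover its body contains exactly the
elements with target column j and target row at least 1. -/
def BodyFull {m n : ℕ} (A : (Fin m × Fin n) ≃ Fin (m * n)) (j : Fin n) : Prop :=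
  NearFull A j ∧ BodyOfColumnIsFull A j

open Fin.NatCast Fin.CommRing

section Aux
variable {m n : ℕ}

lemma applySeq_nil (A : (Fin m × Fin n) ≃ Fin (m * n)) : applySeq A [] = A := rfl

lemma applySeq_cons (A : (Fin m × Fin n) ≃ Fin (m * n)) (g) (L) :
    applySeq A (g :: L) = applySeq (applyRot A g) L := rfl

lemma applySeq_append (A : (Fin m × Fin n) ≃ Fin (m * n)) (L₁ L₂) :
    applySeq A (L₁ ++ L₂) = applySeq (applySeq A L₁) L₂ :=
  List.foldl_append

lemma applyRot_apply (A : (Fin m × Fin n) ≃ Fin (m * n)) (g) (p) :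
    applyRot A g p = A (g.symm p) := rfl

lemma applySeq_replicate_apply (A : (Fin m × Fin n) ≃ Fin (m * n)) (g) (k : ℕ) (p) :
    applySeq A (List.replicate k g) p = A ((g.symm)^[k] p) := by
  induction k generalizing A with
  | zero => rfl
  | succ k ih =>
      rw [List.replicate_succ, applySeq_cons, ih, applyRot_apply,
        Function.iterate_succ_apply']

lemma finRotate_symm_apply' (k : ℕ) [NeZero k] (b : Fin k) :
    (finRotate k).symm b = b - 1 := by
  cases k with
  | zero => exact absurd rfl (NeZero.ne 0)
  | succ k =>
      rw [Equiv.symm_apply_eq, finRotate_succ_apply, sub_add_cancel]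

lemma fin_sub_one_val {k : ℕ} [NeZero k] (a : Fin k) (h : a ≠ 0) :
    ((a - 1 : Fin k) : ℕ) = (a : ℕ) - 1 := by
  cases k with
  | zero => exact absurd rfl (NeZero.ne 0)
  | succ k => rw [Fin.coe_sub_one, if_neg h]

lemma colRot_iterate_apply [NeZero m] (j : Fin n) (k : ℕ) (i : Fin m) (c : Fin n) :
    ((colRot m n j).symm)^[k] (i, c) = if c = j then (i - (k : Fin m), j) else (i, c) := by
  induction k with
  | zero =>
      simp only [Function.iterate_zero, id]
      by_cases h : c = j
      · subst h; simp
      · rw [if_neg h]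
  | succ k ih =>
      rw [Function.iterate_succ_apply', ih]
      by_cases h : c = j
      · subst h
        rw [if_pos rfl, if_pos rfl]
        show (if (c = c) then ((finRotate m).symm (i - (k:Fin m)), c) else _) = _
        rw [if_pos rfl, finRotate_symm_apply']
        congr 1
        push_cast
        ring
      · rw [if_neg h, if_neg h]
        show (if (c = j) then _ else (i,c)) = (i, c)
        rw [if_neg h]

lemma colRot_replicate_apply [NeZero m] (A : (Fin m × Fin n) ≃ Fin (m * n)) (j : Fin n)
    (k : ℕ) (i : Fin m) (c : Fin n) :
    applySeq A (List.replicate k (colRot m n j)) (i, c) =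
      if c = j then A (i - (k : Fin m), j) else A (i, c) := by
  rw [applySeq_replicate_apply, colRot_iterate_apply]
  by_cases h : c = j <;> simp [h]

lemma rowRot_zero_apply [NeZero m] [NeZero n] (A : (Fin m × Fin n) ≃ Fin (m * n))
    (a : Fin m) (b : Fin n) :
    applyRot A (rowRot m n 0) (a, b) = if a = 0 then A (0, b - 1) else A (a, b) := by
  rw [applyRot_apply]
  show A (if a = 0 then ((0 : Fin m), (finRotate n).symm b) else (a, b)) = _
  by_cases h : a = 0
  · rw [if_pos h, if_pos h, finRotate_symm_apply']
  · rw [if_neg h, if_neg h]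

end Aux

section Main
variable {m n : ℕ}

def Bad (A : (Fin m × Fin n) ≃ Fin (m * n)) (j : Fin n) : Prop :=
  ∃ i : Fin m, 1 ≤ (i : ℕ) ∧ (A (i, j) : ℕ) = (j : ℕ)

instance (A : (Fin m × Fin n) ≃ Fin (m * n)) (j : Fin n) : Decidable (Bad A j) := by
  unfold Bad; infer_instance

def badCount (A : (Fin m × Fin n) ≃ Fin (m * n)) : ℕ :=
  (Finset.univ.filter fun j => Bad A j).card

/-- Near-full and not bad implies the body of the column is full. -/
lemma bodyFull_of_notBad (hn : 1 ≤ n) (A : (Fin m × Fin n) ≃ Fin (m * n)) (j : Fin n)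
    (hnf : NearFull A j) (hnb : ¬ Bad A j) : BodyOfColumnIsFull A j := by
  unfold Bad at hnb
  push_neg at hnb
  have hcomm : n * m = m * n := Nat.mul_comm n m
  have hdivlt : ∀ i : Fin m, ((A (i, j)) : ℕ) / n < m := by
    intro i
    have h := (A (i, j)).isLt
    exact Nat.div_lt_of_lt_mul (by omega)
  have hdivge : ∀ i : Fin m, 1 ≤ (i : ℕ) → 1 ≤ ((A (i, j)) : ℕ) / n := by
    intro i hi
    have h1 := hnf i hi
    have h2 := hnb i hi
    have h3 := Nat.div_add_mod ((A (i, j)) : ℕ) n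
    rcases Nat.eq_zero_or_pos (((A (i, j)) : ℕ) / n) with h | h
    · rw [h, Nat.mul_zero, Nat.zero_add, h1] at h3
      exact absurd h3.symm h2
    · exact h
  intro v
  constructor
  · rintro ⟨i, hi, rfl⟩
    exact ⟨hnf i hi, hdivge i hi⟩
  · rintro ⟨hv1, hv2⟩
    set S := {i : Fin m // 1 ≤ (i : ℕ)} with hS
    let ψ : S → S := fun i => ⟨⟨((A (i.1, j)) : ℕ) / n, hdivlt i.1⟩, hdivge i.1 i.2⟩
    have hinj : Function.Injective ψ := by
      intro i i' h
      have hd : ((A (i.1, j)) : ℕ) / n = ((A (i'.1, j)) : ℕ) / n := by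
        have := congrArg (fun x : S => (x.1 : ℕ)) h
        simpa [ψ] using this
      have hm1 := hnf i.1 i.2
      have hm2 := hnf i'.1 i'.2
      have hv : (A (i.1, j) : ℕ) = (A (i'.1, j) : ℕ) := by
        calc (A (i.1, j) : ℕ) = n * ((A (i.1, j) : ℕ) / n) + (A (i.1, j) : ℕ) % n :=
              (Nat.div_add_mod _ n).symm
        _ = n * ((A (i'.1, j) : ℕ) / n) + (A (i'.1, j) : ℕ) % n := by rw [hd, hm1, hm2]
        _ = (A (i'.1, j) : ℕ) := Nat.div_add_mod _ n
      have : A (i.1, j) = A (i'.1, j) := Fin.val_injective hv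
      have := A.injective this
      exact Subtype.ext (congrArg Prod.fst this)
    have hsurj : Function.Surjective ψ := Finite.injective_iff_surjective.mp hinj
    have hvlt : (v : ℕ) / n < m := by
      have := v.isLt
      exact Nat.div_lt_of_lt_mul (by omega)
    obtain ⟨i, hi⟩ := hsurj ⟨⟨(v : ℕ) / n, hvlt⟩, hv2⟩
    refine ⟨i.1, i.2, ?_⟩
    have hd : ((A (i.1, j)) : ℕ) / n = (v : ℕ) / n := by
      have := congrArg (fun x : S => (x.1 : ℕ)) hi
      simpa [ψ] using this
    have hm1 := hnf i.1 i.2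
    apply Fin.val_injective
    calc (A (i.1, j) : ℕ) = n * ((A (i.1, j) : ℕ) / n) + (A (i.1, j) : ℕ) % n :=
          (Nat.div_add_mod _ n).symm
    _ = n * ((v : ℕ) / n) + (v : ℕ) % n := by rw [hd, hm1, hv1]
    _ = (v : ℕ) := Nat.div_add_mod _ n

/-- If column j is bad, some row-0 cell holds an element with target column j
and target row ≥ 1. -/
lemma exists_good_head [NeZero m] (hn : 1 ≤ n)
    (A : (Fin m × Fin n) ≃ Fin (m * n)) (hnf : ∀ j, NearFull A j) (j : Fin n)
    (hbad : Bad A j) :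
    ∃ c : Fin n, (A (0, c) : ℕ) % n = (j : ℕ) ∧ n ≤ (A (0, c) : ℕ) := by
  by_contra hcon
  push_neg at hcon
  have hval : ∀ k : Fin m, (j : ℕ) + (k : ℕ) * n < m * n := by
    intro k
    have hj := j.isLt
    have hk := k.isLt
    calc (j : ℕ) + (k : ℕ) * n < n + (k : ℕ) * n := by omega
    _ = ((k : ℕ) + 1) * n := by ring
    _ ≤ m * n := Nat.mul_le_mul_right n (by omega)
  let val : Fin m → Fin (m * n) := fun k => ⟨(j : ℕ) + (k : ℕ) * n, hval k⟩
  have hcolrow : ∀ k : Fin m, (A.symm (val k)).2 = j ∧ 1 ≤ ((A.symm (val k)).1 : ℕ) := by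
    intro k
    have hA : A (A.symm (val k)) = val k := A.apply_symm_apply _
    have hmod : (val k : ℕ) % n = (j : ℕ) := by
      simp only [val]
      rw [Nat.add_mul_mod_self_right]
      exact Nat.mod_eq_of_lt j.isLt
    rcases Nat.eq_zero_or_pos (k : ℕ) with hk | hk
    · -- k = 0 : the value is j itself, which is in the body by badness
      obtain ⟨i, hi1, hi2⟩ := hbad
      have : A (i, j) = val k := by
        apply Fin.val_injective
        simp only [val, hk]
        omega
      have hsymm : A.symm (val k) = (i, j) := by
        rw [← this, A.symm_apply_apply]
      rw [hsymm]
      exact ⟨rfl, hi1⟩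
    · -- k ≥ 1 : value ≥ n, can't be in row 0 by hcon
      have hge : n ≤ (val k : ℕ) := by
        simp only [val]
        calc n = 1 * n := (one_mul n).symm
        _ ≤ (k : ℕ) * n := Nat.mul_le_mul_right n hk
        _ ≤ (j : ℕ) + (k : ℕ) * n := Nat.le_add_left _ _
      have hrow : (A.symm (val k)).1 ≠ 0 := by
        intro h0
        have hp : A ((0 : Fin m), (A.symm (val k)).2) = val k := by
          rw [← h0]; exact hA
        have h1 := hcon ((A.symm (val k)).2)
        rw [hp] at h1
        have := h1 hmod
        omega
      have hrow1 : 1 ≤ ((A.symm (val k)).1 : ℕ) := by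
        rcases Nat.eq_zero_or_pos ((A.symm (val k)).1 : ℕ) with h | h
        · exact absurd (Fin.ext h) hrow
        · exact h
      have hcol : (A.symm (val k)).2 = j := by
        have := hnf (A.symm (val k)).2 (A.symm (val k)).1 hrow1
        apply Fin.ext
        rw [← this]
        have : ((A.symm (val k)).1, (A.symm (val k)).2) = A.symm (val k) := rfl
        rw [this, hA, hmod]
      exact ⟨hcol, hrow1⟩
  let χ : Fin m → Fin m := fun k => (A.symm (val k)).1
  have hinj : Function.Injective χ := by
    intro k k' h
    have h1 := (hcolrow k).1
    have h2 := (hcolrow k').1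
    have hpos : A.symm (val k) = A.symm (val k') := by
      have e1 : A.symm (val k) = (χ k, j) := by
        rw [← h1]
      have e2 : A.symm (val k') = (χ k', j) := by
        rw [← h2]
      rw [e1, e2, h]
    have := A.symm.injective hpos
    have hv : (val k : ℕ) = (val k' : ℕ) := by rw [this]
    simp only [val] at hv
    have hn' : 0 < n := hn
    apply Fin.ext
    exact Nat.eq_of_mul_eq_mul_right hn' (by omega)
  have hsurj : Function.Surjective χ := Finite.injective_iff_surjective.mp hinj
  obtain ⟨k, hk⟩ := hsurj 0
  have hx : 1 ≤ ((χ k) : ℕ) := (hcolrow k).2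
  rw [hk] at hx
  simp at hx

end Main

section MainRec
variable {m n : ℕ}

lemma fin_one_le_val_iff {k : ℕ} [NeZero k] (i : Fin k) : 1 ≤ (i : ℕ) ↔ i ≠ 0 := by
  constructor
  · intro h h0
    subst h0
    simp at h
  · intro h
    by_contra h1
    refine h (Fin.ext ?_)
    have h2 : ((0 : Fin k) : ℕ) = 0 := rfl
    omega

/-- Witness invariant: every bad column has its good element in row 0 within distance < r. -/
def Wit [NeZero m] (A : (Fin m × Fin n) ≃ Fin (m * n)) (r : ℕ) : Prop :=
  ∀ j, Bad A j → ∃ c : Fin n, ((j - c : Fin n) : ℕ) < r ∧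
    (A (0, c) : ℕ) % n = (j : ℕ) ∧ n ≤ (A (0, c) : ℕ)

lemma main_rec [NeZero m] [NeZero n] (hm : 2 ≤ m) (hn : 2 ≤ n) :
    ∀ N r b : ℕ, ∀ A : (Fin m × Fin n) ≃ Fin (m * n),
      (∀ j, NearFull A j) → badCount A ≤ b → Wit A r → r + b ≤ N →
      ∃ L : List (Equiv.Perm (Fin m × Fin n)),
        (∀ g ∈ L, g ∈ unitRotations m n) ∧ L.length ≤ r + b * m ∧
        (∀ j, NearFull (applySeq A L) j) ∧ (∀ j, ¬ Bad (applySeq A L) j) := by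
  intro N
  induction N with
  | zero =>
      intro r b A hnf hbc hwit hN
      refine ⟨[], by simp, by simp, hnf, ?_⟩
      intro j hbad
      obtain ⟨c, hc, _⟩ := hwit j hbad
      omega
  | succ N ih =>
      intro r b A hnf hbc hwit hN
      by_cases hall : ∀ j, ¬ Bad A j
      · exact ⟨[], by simp, by simp, hnf, hall⟩
      push_neg at hall
      obtain ⟨j₀, hj₀⟩ := hall
      by_cases htrig : ∃ j, Bad A j ∧ (A (0, j) : ℕ) % n = (j : ℕ) ∧ n ≤ (A (0, j) : ℕ)
      · -- a column can be fixed right now with ≤ m column rotations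
        obtain ⟨j, hbadj, ht1, ht2⟩ := htrig
        obtain ⟨i₀, hi₀1, hi₀2⟩ := hbadj
        set k := m - (i₀ : ℕ) with hk
        set L₁ := List.replicate k (colRot m n j) with hL₁
        set B := applySeq A L₁ with hB
        have hcast : ((k : ℕ) : Fin m) = - i₀ := by
          rw [hk, Nat.cast_sub (le_of_lt i₀.isLt), Fin.natCast_self, Fin.cast_val_eq_self,
            zero_sub]
        have hBapp : ∀ (i : Fin m) (c : Fin n),
            B (i, c) = if c = j then A (i + i₀, j) else A (i, c) := by
          intro i c
          rw [hB, hL₁, colRot_replicate_apply, hcast]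
          by_cases h : c = j
          · rw [if_pos h, if_pos h, sub_neg_eq_add]
          · rw [if_neg h, if_neg h]
        have hBother : ∀ (i : Fin m) (c : Fin n), c ≠ j → B (i, c) = A (i, c) :=
          fun i c h => by rw [hBapp, if_neg h]
        have hBnf : ∀ c, NearFull B c := by
          intro c i hi
          by_cases h : c = j
          · subst h
            rw [hBapp, if_pos rfl]
            by_cases h0 : i + i₀ = 0
            · rw [h0]; exact ht1
            · exact hnf c (i + i₀) ((fin_one_le_val_iff _).mpr h0)
          · rw [hBother i c h]; exact hnf c i hi
        have hBgood : ¬ Bad B j := by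
          rintro ⟨i, hi, hval⟩
          rw [hBapp, if_pos rfl] at hval
          by_cases h0 : i + i₀ = 0
          · rw [h0] at hval
            have := j.isLt
            omega
          · have h1 : A (i + i₀, j) = A (i₀, j) := Fin.val_injective (by rw [hval, hi₀2])
            have h2 : ((i + i₀ : Fin m), j) = (i₀, j) := A.injective h1
            have h3 : i + i₀ = i₀ := congrArg Prod.fst h2
            have h4 : i = 0 := by
              have : i + i₀ = 0 + i₀ := by rw [h3, zero_add]
              exact add_right_cancel this
            rw [h4] at hi
            simp at hi
        have hBadIff : ∀ c, c ≠ j → (Bad B c ↔ Bad A c) := by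
          intro c hc
          unfold Bad
          constructor
          · rintro ⟨i, h1, h2⟩
            exact ⟨i, h1, by rw [← hBother i c hc]; exact h2⟩
          · rintro ⟨i, h1, h2⟩
            exact ⟨i, h1, by rw [hBother i c hc]; exact h2⟩
        have hjA : j ∈ Finset.univ.filter (fun c => Bad A c) :=
          Finset.mem_filter.mpr ⟨Finset.mem_univ j, ⟨i₀, hi₀1, hi₀2⟩⟩
        have hb1 : 1 ≤ badCount A := Finset.card_pos.mpr ⟨j, hjA⟩
        have hbB : badCount B < badCount A := by
          apply Finset.card_lt_card
          have hsub : Finset.univ.filter (fun c => Bad B c) ⊆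
              Finset.univ.filter (fun c => Bad A c) := by
            intro c hc
            rw [Finset.mem_filter] at hc ⊢
            refine ⟨Finset.mem_univ c, ?_⟩
            by_cases h : c = j
            · subst h; exact absurd hc.2 hBgood
            · exact (hBadIff c h).mp hc.2
          refine (Finset.ssubset_iff_of_subset hsub).mpr ⟨j, hjA, ?_⟩
          intro hcc
          exact hBgood (Finset.mem_filter.mp hcc).2
        have hWitB : Wit B r := by
          intro j' hbadj'
          have hj'ne : j' ≠ j := fun h => hBgood (h ▸ hbadj')
          have hbadA : Bad A j' := (hBadIff j' hj'ne).mp hbadj'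
          obtain ⟨c, hc1, hc2, hc3⟩ := hwit j' hbadA
          have hcne : c ≠ j := by
            intro h
            rw [h] at hc2
            exact hj'ne (Fin.ext (by rw [← hc2, ht1]))
          exact ⟨c, hc1, by rw [hBother 0 c hcne]; exact hc2,
            by rw [hBother 0 c hcne]; exact hc3⟩
        obtain ⟨L₂, hL₂1, hL₂2, hL₂3, hL₂4⟩ :=
          ih r (b - 1) B hBnf (by omega) hWitB (by omega)
        refine ⟨L₁ ++ L₂, ?_, ?_, ?_, ?_⟩
        · intro g hg
          rcases List.mem_append.mp hg with h | h
          · rw [hL₁] at h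
            rw [(List.eq_of_mem_replicate h)]
            exact Or.inr ⟨j, rfl⟩
          · exact hL₂1 g h
        · rw [List.length_append, hL₁, List.length_replicate]
          have e1 : (b - 1) * m = b * m - m := Nat.sub_one_mul b m
          have e2 : m ≤ b * m := Nat.le_mul_of_pos_left m (by omega)
          omega
        · rw [applySeq_append, ← hB]; exact hL₂3
        · rw [applySeq_append, ← hB]; exact hL₂4
      · -- no column triggered: rotate row 0 once
        push_neg at htrig
        set B := applyRot A (rowRot m n 0) with hB
        have hBbody : ∀ (i : Fin m) (c : Fin n), i ≠ 0 → B (i, c) = A (i, c) := by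
          intro i c h
          rw [hB, rowRot_zero_apply, if_neg h]
        have hBhead : ∀ c : Fin n, B (0, c) = A (0, c - 1) := by
          intro c
          rw [hB, rowRot_zero_apply, if_pos rfl]
        have hBadIff : ∀ c, Bad B c ↔ Bad A c := by
          intro c
          unfold Bad
          constructor
          · rintro ⟨i, h1, h2⟩
            refine ⟨i, h1, ?_⟩
            rw [← hBbody i c (by rw [← fin_one_le_val_iff]; exact h1)]
            exact h2
          · rintro ⟨i, h1, h2⟩
            refine ⟨i, h1, ?_⟩
            rw [hBbody i c (by rw [← fin_one_le_val_iff]; exact h1)]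
            exact h2
        have hBnf : ∀ c, NearFull B c := by
          intro c i hi
          rw [hBbody i c (by rw [← fin_one_le_val_iff]; exact hi)]
          exact hnf c i hi
        have hbcB : badCount B ≤ b := by
          have : badCount B = badCount A := by
            unfold badCount
            congr 1
            apply Finset.filter_congr
            intro x _
            simp only [hBadIff]
          omega
        have hr1 : 1 ≤ r := by
          obtain ⟨c, hc1, _, _⟩ := hwit j₀ hj₀
          omega
        have hWitB : Wit B (r - 1) := by
          intro j hbad
          have hbadA := (hBadIff j).mp hbad
          obtain ⟨c, hc1, hc2, hc3⟩ := hwit j hbadA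
          have hcne : c ≠ j := by
            intro h
            subst h
            exact absurd hc3 (not_le.mpr (htrig c hbadA hc2))
          refine ⟨c + 1, ?_, ?_, ?_⟩
          · have h1 : j - (c + 1) = (j - c) - 1 := by ring
            have h2 : j - c ≠ 0 := sub_ne_zero.mpr (Ne.symm hcne)
            have h3 : ((j - c : Fin n) : ℕ) ≠ 0 := fun h => h2 (Fin.ext h)
            rw [h1, fin_sub_one_val _ h2]
            omega
          · rw [hBhead, add_sub_cancel_right]; exact hc2
          · rw [hBhead, add_sub_cancel_right]; exact hc3
        obtain ⟨L₂, hL₂1, hL₂2, hL₂3, hL₂4⟩ :=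
          ih (r - 1) b B hBnf hbcB hWitB (by omega)
        refine ⟨rowRot m n 0 :: L₂, ?_, ?_, ?_, ?_⟩
        · intro g hg
          rcases List.mem_cons.mp hg with h | h
          · rw [h]; exact Or.inl ⟨0, rfl⟩
          · exact hL₂1 g h
        · rw [List.length_cons]
          omega
        · rw [applySeq_cons, ← hB]; exact hL₂3
        · rw [applySeq_cons, ← hB]; exact hL₂4

end MainRec


theorem floatMinimums_bound :
    ∃ C : ℕ, 0 < C ∧ ∀ m n : ℕ, 2 ≤ m → 2 ≤ n →
      ∀ A : (Fin m × Fin n) ≃ Fin (m * n),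
        (∀ j : Fin n, NearFull A j) →
        ∃ L : List (Equiv.Perm (Fin m × Fin n)),
          (∀ g ∈ L, g ∈ unitRotations m n) ∧
          L.length ≤ C * m * n ∧
          ∀ j : Fin n, BodyFull (applySeq A L) j := by
  refine ⟨2, by norm_num, ?_⟩
  intro m n hm hn A hnf
  haveI : NeZero m := ⟨by omega⟩
  haveI : NeZero n := ⟨by omega⟩
  have hwit : Wit A n := by
    intro j hbad
    obtain ⟨c, h1, h2⟩ := exists_good_head (by omega) A hnf j hbad
    exact ⟨c, (j - c).isLt, h1, h2⟩
  have hbc : badCount A ≤ n := by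
    unfold badCount
    calc (Finset.univ.filter fun j : Fin n => Bad A j).card
        ≤ (Finset.univ : Finset (Fin n)).card := Finset.card_filter_le _ _
    _ = n := by rw [Finset.card_univ, Fintype.card_fin]
  obtain ⟨L, hL1, hL2, hL3, hL4⟩ := main_rec hm hn (n + n) n n A hnf hbc hwit le_rfl
  refine ⟨L, hL1, ?_, ?_⟩
  · have e1 : 2 * m * n = m * n + m * n := by ring
    have e2 : n ≤ m * n := Nat.le_mul_of_pos_left n (by omega)
    have e3 : n * m = m * n := Nat.mul_comm n m
    omega
  · intro j
    exact ⟨hL3 j, bodyFull_of_notBad (by omega) _ j (hL3 j) (hL4 j)⟩
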